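/- Let X be a sub-Ostaszewski space, i.e., an uncountable Hausdorff topological space in which every closed subset is either countable or has countable complement. Then every subspace Y of X is exponentially separable. -/
import Mathlib


/-- A space `X` is exponentially separable if, for every countable family `F`
of closed subsets of `X`, there is a countable set `A ⊆ X` that is strongly
dense in `F`: `A` meets `⋂₀ G` for every subfamily `G ⊆ F` whose intersection
is nonempty. -/
def ExponentiallySeparable (X : Type*) [TopologicalSpace X] : Prop :=
  ∀ F : Set (Set X), F.Countable → (∀ s ∈ F, IsClosed s) →
    ∃ A : Set X, A.Countable ∧ ∀ G ⊆ F, (⋂₀ G).Nonempty → (A ∩ ⋂₀ G).Nonempty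

/-- If `X` is sub-Ostaszewski (an uncountable Hausdorff space
in which every closed set is countable or has countable complement), then every
subspace of `X` is exponentially separable. -/
theorem subOstaszewski_subspaces_exponentiallySeparable
    {X : Type*} [TopologicalSpace X] [T2Space X] [Uncountable X]
    (hX : ∀ C : Set X, IsClosed C → C.Countable ∨ Cᶜ.Countable)
    (Y : Set X) :
    ExponentiallySeparable ↥Y := by
  intro F hFc hFcl
  have key : ∀ s ∈ F, s.Countable ∨ (sᶜ : Set ↥Y).Countable := by
    intro s hs
    rcases hX (closure (Subtype.val '' s)) isClosed_closure with h | h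
    · left
      exact ((h.mono subset_closure).preimage Subtype.val_injective).mono
        (Set.subset_preimage_image _ _)
    · right
      refine (h.preimage Subtype.val_injective).mono ?_
      intro y hy
      simp only [Set.mem_compl_iff, Set.mem_preimage] at hy ⊢
      intro hC
      exact hy ((hFcl s hs).closure_eq ▸ closure_subtype.mpr hC)
  by_cases hYc : Set.Countable (Set.univ : Set ↥Y)
  · exact ⟨Set.univ, hYc, fun G _ ⟨x, hx⟩ => ⟨x, trivial, hx⟩⟩
  · have hB : (⋃ s ∈ {s ∈ F | ¬ s.Countable}, sᶜ).Countable := by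
      apply Set.Countable.biUnion (hFc.mono (Set.sep_subset _ _))
      intro s hs
      rcases key s hs.1 with h | h
      · exact absurd h hs.2
      · exact h
    have hne : (⋃ s ∈ {s ∈ F | ¬ s.Countable}, sᶜ)ᶜ.Nonempty := by
      by_contra h
      rw [Set.not_nonempty_iff_eq_empty, Set.compl_empty_iff] at h
      exact hYc (h ▸ hB)
    obtain ⟨y₀, hy₀⟩ := hne
    have hA : ((⋃ s ∈ {s ∈ F | s.Countable}, s) ∪ {y₀} : Set ↥Y).Countable := by
      refine Set.Countable.union ?_ (Set.countable_singleton _)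
      exact Set.Countable.biUnion (hFc.mono (Set.sep_subset _ _)) fun s hs => hs.2
    refine ⟨(⋃ s ∈ {s ∈ F | s.Countable}, s) ∪ {y₀}, hA, ?_⟩
    · rintro G hG ⟨x, hx⟩
      by_cases hall : ∀ s ∈ G, ¬ s.Countable
      · refine ⟨y₀, Or.inr rfl, ?_⟩
        intro s hsG
        by_contra hys
        exact hy₀ (Set.mem_biUnion ⟨hG hsG, hall s hsG⟩ hys)
      · push_neg at hall
        obtain ⟨s, hsG, hsC⟩ := hall
        exact ⟨x, Or.inl (Set.mem_biUnion ⟨hG hsG, hsC⟩ (hx s hsG)), hx⟩
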